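/- arXiv:1308.1572 — 3 statements merged into one kernel-verified Lean document; each statement's English description precedes it below -/
import Mathlib

section
/- For a prime p ≠ 3, the field ℚ₃ of 3-adic numbers contains a cube root of p if and only if p ≡ ±1 (mod 9). -/
open Polynomial

lemma aux_cube (n a : ℤ_[3]) (ha : ‖a‖ = 1) (h : ‖a ^ 3 - n‖ ≤ ((27 : ℝ))⁻¹) :
    ∃ x : ℤ_[3], x ^ 3 = n := by
  have h3 : ‖(3 : ℤ_[3])‖ = (3 : ℝ)⁻¹ := by
    have := @PadicInt.norm_p 3 ⟨by norm_num⟩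
    simpa using this
  obtain ⟨z, hz, -⟩ := hensels_lemma (F := X ^ 3 - C n) (a := a) (by
    have hderiv : (X ^ 3 - C n).derivative.eval a = 3 * a ^ 2 := by
      simp [derivative_pow]
    simp only [coe_aeval_eq_eval]
    rw [hderiv]
    have : ‖3 * a ^ 2‖ = (3 : ℝ)⁻¹ := by
      rw [norm_mul, norm_pow, ha, h3]; ring
    rw [this]
    calc ‖(X ^ 3 - C n).eval a‖ = ‖a ^ 3 - n‖ := by simp
      _ ≤ (27 : ℝ)⁻¹ := h
      _ < ((3:ℝ)⁻¹) ^ 2 := by norm_num)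
  refine ⟨z, ?_⟩
  have : z ^ 3 - n = 0 := by simpa using hz
  exact sub_eq_zero.mp this

lemma cube27 : ∀ r : ZMod 27,
    ((ZMod.castHom (by norm_num : (9:ℕ) ∣ 27) (ZMod 9)) r = 1 ∨
     (ZMod.castHom (by norm_num : (9:ℕ) ∣ 27) (ZMod 9)) r = -1) →
    ∃ a : ZMod 27, a ^ 3 = r ∧ a.val % 3 ≠ 0 := by decide

lemma cube9 : ∀ q y : ZMod (3 ^ 2), y ^ 3 = q → q ≠ 0 → q = 1 ∨ q = -1 := by decide

/-- For a prime `p ≠ 3`, the field `ℚ₃` contains a cube root of `p` iff `p ≡ ±1 (mod 9)`. -/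
theorem stmt_2 (p : ℕ) (hp : p.Prime) (hp3 : p ≠ 3) :
    (∃ x : ℚ_[3], x ^ 3 = (p : ℚ_[3])) ↔ ((p : ZMod 9) = 1 ∨ (p : ZMod 9) = -1) := by
  have hnd : ¬ (3 ∣ p) := fun h =>
    hp3 ((Nat.prime_dvd_prime_iff_eq (by norm_num) hp).mp h).symm
  constructor
  · rintro ⟨x, hx⟩
    have hple : ‖(p : ℚ_[3])‖ ≤ 1 := by
      have := @Padic.norm_int_le_one 3 ⟨by norm_num⟩ (p : ℤ)
      simpa using this
    have hxle : ‖x‖ ≤ 1 := by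
      by_contra hgt
      push_neg at hgt
      have h1 : ‖x‖ ^ 3 ≤ 1 := by rw [← norm_pow, hx]; exact hple
      have h2 : 1 < ‖x‖ ^ 3 := one_lt_pow₀ hgt (by norm_num)
      linarith
    set X : ℤ_[3] := ⟨x, hxle⟩ with hXdef
    have hX : X ^ 3 = (p : ℤ_[3]) := Subtype.ext (by push_cast [hXdef]; exact hx)
    have hmap : (PadicInt.toZModPow 2 X) ^ 3 = (p : ZMod (3 ^ 2)) := by
      rw [← map_pow, hX, map_natCast]
    have hne : (p : ZMod (3 ^ 2)) ≠ 0 := by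
      rw [Ne, ZMod.natCast_eq_zero_iff]
      exact fun h => hnd (dvd_trans (by norm_num) h)
    have := cube9 _ _ hmap hne
    exact (show (3:ℕ)^2 = 9 by norm_num) ▸ this
  · intro h
    have h' : (ZMod.castHom (by norm_num : (9:ℕ) ∣ 27) (ZMod 9)) (p : ZMod 27) = 1 ∨
        (ZMod.castHom (by norm_num : (9:ℕ) ∣ 27) (ZMod 9)) (p : ZMod 27) = -1 := by
      rwa [map_natCast]
    obtain ⟨a, ha3, hav⟩ := cube27 _ h'
    set A : ℕ := a.val with hA
    have hAcast : ((A : ℕ) : ZMod 27) = a := by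
      rw [hA, ZMod.natCast_val, ZMod.cast_id]
    have hdvd : (27 : ℤ) ∣ ((A : ℤ) ^ 3 - (p : ℤ)) := by
      have := (ZMod.intCast_zmod_eq_zero_iff_dvd ((A : ℤ) ^ 3 - (p : ℤ)) 27).mp (by
        push_cast
        rw [hAcast, ha3]
        ring)
      exact_mod_cast this
    have hnorm : ‖((A : ℤ_[3])) ^ 3 - ((p : ℕ) : ℤ_[3])‖ ≤ ((27 : ℝ))⁻¹ := by
      have hcast : (((A : ℤ) ^ 3 - (p : ℤ) : ℤ) : ℤ_[3]) =
          ((A : ℤ_[3])) ^ 3 - ((p : ℕ) : ℤ_[3]) := by push_cast; ring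
      rw [← hcast]
      have := (@PadicInt.norm_int_le_pow_iff_dvd 3 ⟨by norm_num⟩
        ((A : ℤ) ^ 3 - (p : ℤ)) 3).mpr (by exact_mod_cast hdvd)
      calc ‖(((A : ℤ) ^ 3 - (p : ℤ) : ℤ) : ℤ_[3])‖ ≤ (3 : ℝ) ^ (-(3:ℕ) : ℤ) := this
        _ = (27 : ℝ)⁻¹ := by norm_num
    have hAnorm : ‖(A : ℤ_[3])‖ = 1 := by
      refine le_antisymm (PadicInt.norm_le_one _) ?_
      by_contra hlt
      push_neg at hlt
      have := (@PadicInt.norm_int_lt_one_iff_dvd 3 ⟨by norm_num⟩ (A : ℤ)).mp (by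
        have : ‖((A : ℤ) : ℤ_[3])‖ < 1 := by exact_mod_cast hlt
        exact this)
      have h3A : 3 ∣ A := by exact_mod_cast this
      exact hav (by omega)
    obtain ⟨z, hz⟩ := aux_cube ((p : ℕ) : ℤ_[3]) (A : ℤ_[3]) hAnorm hnorm
    refine ⟨(z : ℚ_[3]), ?_⟩
    rw [← PadicInt.coe_pow, hz, PadicInt.coe_natCast]
end

section
/- For a prime p ≠ 3 with p ≢ ±1 (mod 9), the prime 3 is totally ramified in the field ℚ(∛p). -/
open NumberField IntermediateField Polynomial

private theorem stmt_4_aux (K : Type*) [Field K] [NumberField K]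
    (hrank : Module.finrank ℚ K = 3)
    (p : ℕ) (c u v : ℤ) (hc : (p:ℤ)^3 - (p:ℤ) = 3 * c) (huv : u * 3 + v * c = 1)
    (a : 𝓞 K) (ha : a ^ 3 = (p : 𝓞 K)) :
    ∀ P : Ideal (𝓞 K), P.IsPrime → (3 : 𝓞 K) ∈ P →
      Ideal.ramificationIdx' (Ideal.span {(3 : ℤ)}) P = 3 := by
  set b : 𝓞 K := a - (p : 𝓞 K) with hbdef
  have hcast : (3 : 𝓞 K) * (c : 𝓞 K) = (p : 𝓞 K)^3 - (p : 𝓞 K) := by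
    have h := congrArg (fun z : ℤ => (z : 𝓞 K)) hc
    push_cast at h
    linear_combination -h
  have hb3 : b^3 + 3*(p:𝓞 K)*b^2 + 3*(p:𝓞 K)^2*b + 3*(c : 𝓞 K) = 0 := by
    rw [hbdef]
    linear_combination ha + hcast
  have hbez : (u : 𝓞 K) * 3 + (v : 𝓞 K) * (c : 𝓞 K) = 1 := by
    have h := congrArg (fun z : ℤ => (z : 𝓞 K)) huv
    push_cast at h
    linear_combination h
  intro P hP h3P
  -- `b ∈ P`
  have hbP : b ∈ P := by
    apply hP.mem_of_pow_mem 3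
    have h : b^3 = 3 * (-((p:𝓞 K)*b^2 + (p:𝓞 K)^2*b + (c:𝓞 K))) := by
      linear_combination hb3
    rw [h]
    exact Ideal.mul_mem_right _ _ h3P
  have hb3P3 : b^3 ∈ P^3 := Ideal.pow_mem_pow hbP 3
  -- step 1 : `3 ∈ P^2`
  have h3P2 : (3 : 𝓞 K) ∈ P^2 := by
    have hterm1 : 3*(p:𝓞 K)*b^2 ∈ P^2 := by
      have : 3*(p:𝓞 K)*b^2 = (3*b) * ((p:𝓞 K)*b) := by ring
      rw [this, pow_two]
      exact Ideal.mul_mem_right _ _ (Ideal.mul_mem_mul h3P hbP)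
    have hterm2 : 3*(p:𝓞 K)^2*b ∈ P^2 := by
      have : 3*(p:𝓞 K)^2*b = (3*b) * (p:𝓞 K)^2 := by ring
      rw [this, pow_two]
      exact Ideal.mul_mem_right _ _ (Ideal.mul_mem_mul h3P hbP)
    have h3cP2 : (3 : 𝓞 K)*(c : 𝓞 K) ∈ P^2 := by
      have h : (3:𝓞 K)*(c:𝓞 K) = -(b^3) - 3*(p:𝓞 K)*b^2 - 3*(p:𝓞 K)^2*b := by
        linear_combination hb3
      rw [h]
      exact sub_mem (sub_mem (neg_mem ((Ideal.pow_le_pow_right (by norm_num)) hb3P3)) hterm1) hterm2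
    have h9P2 : (9 : 𝓞 K) ∈ P^2 := by
      have : (9 : 𝓞 K) = 3 * 3 := by norm_num
      rw [this, pow_two]
      exact Ideal.mul_mem_mul h3P h3P
    have h : (3 : 𝓞 K) = (u : 𝓞 K) * 9 + (v : 𝓞 K) * (3 * (c : 𝓞 K)) := by
      linear_combination (-3) * hbez
    rw [h]
    exact add_mem (Ideal.mul_mem_left _ _ h9P2) (Ideal.mul_mem_left _ _ h3cP2)
  -- step 2 : `3 ∈ P^3`
  have h3P3 : (3 : 𝓞 K) ∈ P^3 := by
    have hterm1 : 3*(p:𝓞 K)*b^2 ∈ P^3 := by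
      have : 3*(p:𝓞 K)*b^2 = (3 * b^2) * (p:𝓞 K) := by ring
      rw [this, show (3:ℕ) = 1 + 2 from rfl, pow_add]
      exact Ideal.mul_mem_right _ _ (Ideal.mul_mem_mul (by simpa using h3P) (Ideal.pow_mem_pow hbP 2))
    have hterm2 : 3*(p:𝓞 K)^2*b ∈ P^3 := by
      have : 3*(p:𝓞 K)^2*b = (3 * b) * (p:𝓞 K)^2 := by ring
      rw [this, show (3:ℕ) = 2 + 1 from rfl, pow_add]
      exact Ideal.mul_mem_right _ _ (Ideal.mul_mem_mul h3P2 (by simpa using hbP))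
    have h3cP3 : (3 : 𝓞 K)*(c : 𝓞 K) ∈ P^3 := by
      have h : (3:𝓞 K)*(c:𝓞 K) = -(b^3) - 3*(p:𝓞 K)*b^2 - 3*(p:𝓞 K)^2*b := by
        linear_combination hb3
      rw [h]
      exact sub_mem (sub_mem (neg_mem hb3P3) hterm1) hterm2
    have h27P3 : (27 : 𝓞 K) ∈ P^3 := by
      have : (27 : 𝓞 K) = 3 * 3 * 3 := by norm_num
      rw [this, show (3:ℕ) = 1 + 1 + 1 from rfl, pow_add, pow_add]
      exact Ideal.mul_mem_mul (Ideal.mul_mem_mul (by simpa using h3P) (by simpa using h3P)) (by simpa using h3P)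
    have h : (3 : 𝓞 K) = ((u : 𝓞 K) * (u : 𝓞 K)) * 27
        + ((v : 𝓞 K) * ((u : 𝓞 K) * 6 + (v : 𝓞 K) * (c : 𝓞 K))) * (3 * (c : 𝓞 K)) := by
      linear_combination ((-3) * ((u : 𝓞 K) * 3 + (v : 𝓞 K) * (c : 𝓞 K) + 1)) * hbez
    rw [h]
    exact add_mem (Ideal.mul_mem_left _ _ h27P3) (Ideal.mul_mem_left _ _ h3cP3)
  -- ## Norm bound : `3 ∉ P^4`
  have hnorm3 : Ideal.absNorm (Ideal.span {(3 : 𝓞 K)}) = 27 := by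
    rw [Ideal.absNorm_span_singleton]
    have h3alg : (3 : 𝓞 K) = algebraMap ℤ (𝓞 K) 3 := by norm_num
    rw [h3alg, Algebra.norm_algebraMap_of_basis (RingOfIntegers.basis K)]
    rw [← Module.finrank_eq_card_basis (RingOfIntegers.basis K), RingOfIntegers.rank, hrank]
    norm_num
  have hNP : 3 ≤ Ideal.absNorm P := by
    have hdvd : Ideal.absNorm P ∣ 27 := by
      rw [← hnorm3]
      exact map_dvd _ (Ideal.dvd_iff_le.mpr ((Ideal.span_singleton_le_iff_mem P).mpr h3P))
    have hne1 : Ideal.absNorm P ≠ 1 := by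
      rw [Ne, Ideal.absNorm_eq_one_iff]
      exact hP.ne_top
    have hdvd' : Ideal.absNorm P ∣ 3^3 := by
      rwa [show (3:ℕ)^3 = 27 by norm_num]
    obtain ⟨m, hm, hEq⟩ := (Nat.dvd_prime_pow (by norm_num : Nat.Prime 3)).mp hdvd'
    rcases Nat.eq_zero_or_pos m with rfl | hm0
    · rw [pow_zero] at hEq; exact absurd hEq hne1
    · calc (3:ℕ) = 3^1 := rfl
        _ ≤ 3^m := Nat.pow_le_pow_right (by norm_num) hm0
        _ = _ := hEq.symm
  have hnP4 : (3 : 𝓞 K) ∉ P^4 := by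
    intro h34
    have hdvd : Ideal.absNorm (P^4) ∣ 27 := by
      rw [← hnorm3]
      exact map_dvd _ (Ideal.dvd_iff_le.mpr ((Ideal.span_singleton_le_iff_mem _).mpr h34))
    rw [map_pow] at hdvd
    have := Nat.le_of_dvd (by norm_num) hdvd
    have : 3^4 ≤ Ideal.absNorm P ^ 4 := Nat.pow_le_pow_left hNP 4
    omega
  -- ## Conclusion
  have hmap : Ideal.map (algebraMap ℤ (𝓞 K)) (Ideal.span {(3:ℤ)})
      = Ideal.span {(3 : 𝓞 K)} := by
    rw [Ideal.map_span, Set.image_singleton, map_ofNat]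
  apply Ideal.ramificationIdx'_spec
  · rw [hmap]
    exact (Ideal.span_singleton_le_iff_mem _).mpr h3P3
  · rw [hmap]
    intro hcon
    exact hnP4 (hcon (Ideal.mem_span_singleton_self _))

/-- For a prime `p ≠ 3` with `p ≢ ±1 (mod 9)`, the prime `3` is totally ramified in
`ℚ(∛p)`: every nonzero prime of the ring of integers above `3` has ramification index `3`. -/
theorem stmt_4 (p : ℕ) (hp : p.Prime) (hp3 : p ≠ 3)
    (h9 : ¬((p : ZMod 9) = 1 ∨ (p : ZMod 9) = -1))
    (K : IntermediateField ℚ ℝ) (hK : K = ℚ⟮(p : ℝ) ^ ((1 : ℝ) / 3)⟯) :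
    ∀ P : Ideal (𝓞 K), P.IsPrime → P ≠ ⊥ → (3 : 𝓞 K) ∈ P →
      Ideal.ramificationIdx' (Ideal.span {(3 : ℤ)}) P = 3 := by
  subst hK
  haveI : Fact p.Prime := ⟨hp⟩
  -- ## Arithmetic preliminaries
  have h3p : ¬ (3 ∣ p) := by
    intro h
    rcases (Nat.Prime.eq_one_or_self_of_dvd hp 3 h) with h1 | h1 <;> omega
  have key : ¬ ((9:ℤ) ∣ (p:ℤ)^3 - (p:ℤ)) := by
    intro h
    have hx : ((p:ZMod 9))^3 = (p:ZMod 9) := by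
      have h0 : (((p:ℤ)^3 - (p:ℤ) : ℤ) : ZMod 9) = 0 := by
        exact_mod_cast (ZMod.intCast_zmod_eq_zero_iff_dvd _ _).mpr h
      push_cast at h0
      linear_combination h0
    have h1 : (p:ZMod 9) ≠ 1 := fun h => h9 (Or.inl h)
    have h2 : (p:ZMod 9) ≠ -1 := fun h => h9 (Or.inr h)
    have hc : ZMod.castHom (show (3:ℕ) ∣ 9 by norm_num) (ZMod 3) (p:ZMod 9) = 0 := by
      revert hx h1 h2; generalize (p : ZMod 9) = x; revert x; decide
    rw [map_natCast] at hc
    exact h3p ((ZMod.natCast_eq_zero_iff p 3).mp hc)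
  have h3dvd : (3:ℤ) ∣ (p:ℤ)^3 - (p:ℤ) := by
    have h0 : (((p:ℤ)^3 - (p:ℤ) : ℤ) : ZMod 3) = 0 := by
      push_cast
      generalize ((p:ℕ) : ZMod 3) = x; revert x; decide
    exact_mod_cast (ZMod.intCast_zmod_eq_zero_iff_dvd _ _).mp h0
  obtain ⟨c, hc⟩ := h3dvd
  have h3c : ¬ ((3:ℤ) ∣ c) := by
    intro ⟨d, hd⟩; exact key ⟨d, by omega⟩
  obtain ⟨u, v, huv⟩ :=
    ((Nat.prime_iff_prime_int.mp (by norm_num : Nat.Prime 3)).coprime_iff_not_dvd).mpr h3c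
  -- ## The field `ℚ(∛p)`
  set α : ℝ := (p:ℝ) ^ ((1:ℝ)/3) with hαdef
  have hα3 : α ^ 3 = (p:ℝ) := by
    rw [hαdef, ← Real.rpow_natCast ((p:ℝ) ^ ((1:ℝ)/3)) 3, ← Real.rpow_mul (by positivity)]
    norm_num
  have hcube : ∀ b : ℚ, b ^ 3 ≠ (p:ℚ) := by
    intro b hb
    have hb0 : b ≠ 0 := by
      rintro rfl
      rw [zero_pow (by norm_num)] at hb
      exact hp.ne_zero (by exact_mod_cast hb.symm)
    have h1 : padicValRat p (b^3) = padicValRat p p := by rw [hb]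
    rw [padicValRat.pow b, padicValRat.self hp.one_lt] at h1
    omega
  have hmq : (X^3 - C (p:ℚ)).Monic := monic_X_pow_sub_C _ (by norm_num)
  have hirr : Irreducible (X^3 - C (p:ℚ)) :=
    X_pow_sub_C_irreducible_of_prime Nat.prime_three hcube
  have hroot : (aeval α) (X^3 - C (p:ℚ)) = 0 := by
    simp [hα3]
  have hint : IsIntegral ℚ α := ⟨X^3 - C (p:ℚ), hmq, by rwa [Polynomial.aeval_def] at hroot⟩
  haveI : FiniteDimensional ℚ ℚ⟮α⟯ := adjoin.finiteDimensional hint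
  haveI : NumberField ℚ⟮α⟯ := ⟨⟩
  have hmin : minpoly ℚ α = X^3 - C (p:ℚ) :=
    (minpoly.eq_of_irreducible_of_monic hirr hroot hmq).symm
  have hrank : Module.finrank ℚ ℚ⟮α⟯ = 3 := by
    rw [adjoin.finrank hint, hmin, natDegree_X_pow_sub_C]
  -- ## Apply the auxiliary lemma
  set αK : ℚ⟮α⟯ := ⟨α, mem_adjoin_simple_self ℚ α⟩ with hαK
  have ha3 : αK ^ 3 = (p : ℚ⟮α⟯) := by
    apply Subtype.ext
    push_cast
    exact hα3
  set a : 𝓞 ℚ⟮α⟯ := ⟨αK, X^3 - C (p:ℤ), monic_X_pow_sub_C _ (by norm_num), by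
    rw [eval₂_sub, eval₂_C, eval₂_X_pow, ha3, map_natCast, sub_self]⟩ with hadef
  have ha : a ^ 3 = (p : 𝓞 ℚ⟮α⟯) := by
    apply Subtype.ext
    push_cast [hadef]
    exact ha3
  intro P hP _ h3P
  exact stmt_4_aux ℚ⟮α⟯ hrank p c u v hc huv a ha P hP h3P
end

section
/- Let x³ − p be the minimal polynomial defining E = K(∛p) over a number field K containing ∛(pq) for distinct primes p, q ≠ 3. Then the relative discriminant ideal of E/K divides (27) in O_K; in particular, only primes of K above 3 can ramify in E. -/
open NumberField Polynomial nonZeroDivisors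

lemma aux_cube_dvd_cube {R : Type*} [CommRing R] [IsDedekindDomain R] {I J : Ideal R}
    (hJ : J ≠ ⊥) (h : I ^ 3 ∣ J ^ 3) : I ∣ J := by
  classical
  by_cases hI : I = ⊥
  · subst hI
    rw [← Ideal.zero_eq_bot, zero_pow (by norm_num : (3:ℕ) ≠ 0), zero_dvd_iff,
      pow_eq_zero_iff (by norm_num : (3:ℕ) ≠ 0), Ideal.zero_eq_bot] at h
    exact absurd h hJ
  · rw [← Ideal.zero_eq_bot] at hI hJ
    rw [UniqueFactorizationMonoid.dvd_iff_normalizedFactors_le_normalizedFactors hI hJ]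
    rw [UniqueFactorizationMonoid.dvd_iff_normalizedFactors_le_normalizedFactors
      (pow_ne_zero 3 hI) (pow_ne_zero 3 hJ), UniqueFactorizationMonoid.normalizedFactors_pow,
      UniqueFactorizationMonoid.normalizedFactors_pow] at h
    rw [Multiset.le_iff_count] at h ⊢
    intro a
    have := h a
    simpa [Multiset.count_nsmul] using this

lemma aux_mem_diff (K E : Type*) [Field K] [NumberField K] [Field E] [NumberField E]
    [Algebra K E] (x : 𝓞 E) (hx : Algebra.adjoin K {(algebraMap (𝓞 E) E x)} = ⊤)
    (f : Polynomial (𝓞 K)) (hf : aeval x f = 0) :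
    aeval x (derivative f) ∈ differentIdeal (𝓞 K) (𝓞 E) := by
  haveI : Module.IsTorsionFree (𝓞 K) (𝓞 E) := by
    refine (Module.isTorsionFree_iff_algebraMap_injective (R := 𝓞 K) (A := 𝓞 E)).mpr ?_
    have h1 : Function.Injective (algebraMap (𝓞 K) E) := by
      rw [IsScalarTower.algebraMap_eq (𝓞 K) K E]
      exact (algebraMap K E).injective.comp (IsFractionRing.injective _ _)
    have h2 : algebraMap (𝓞 K) E = (algebraMap (𝓞 E) E).comp (algebraMap (𝓞 K) (𝓞 E)) :=
      (IsScalarTower.algebraMap_eq (𝓞 K) (𝓞 E) E)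
    rw [h2, RingHom.coe_comp] at h1
    exact Function.Injective.of_comp h1
  have hint : IsIntegral (𝓞 K) x := IsIntegralClosure.isIntegral (𝓞 K) E x
  obtain ⟨h, hh⟩ := minpoly.isIntegrallyClosed_dvd hint hf
  have hmem := aeval_derivative_mem_differentIdeal (𝓞 K) K E x hx
  have : aeval x (derivative f) = aeval x (derivative (minpoly (𝓞 K) x)) * aeval x h := by
    rw [hh, derivative_mul, map_add, map_mul, map_mul, minpoly.aeval, zero_mul, add_zero]
  rw [this]
  exact Ideal.mul_mem_right _ _ hmem

lemma aux_beta (p q : ℕ) (hp : p.Prime) (hq : q.Prime)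
    (K E : Type*) [Field K] [NumberField K] [Field E] [NumberField E] [Algebra K E]
    (γ : K) (hγ : γ ^ 3 = ((p * q : ℕ) : K))
    (α : E) (hα : α ^ 3 = (p : E)) (hgen : Algebra.adjoin K {α} = ⊤) :
    ∃ β : E, β ^ 3 = (q : E) ∧ Algebra.adjoin K {β} = ⊤ := by
  have hp0 : (p : E) ≠ 0 := Nat.cast_ne_zero.mpr hp.ne_zero
  have hq0 : (q : E) ≠ 0 := Nat.cast_ne_zero.mpr hq.ne_zero
  have hα0 : α ≠ 0 := by
    intro h; rw [h] at hα; simp at hα; exact hp0 hα.symm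
  have hc : (algebraMap K E γ) ^ 3 = (p : E) * (q : E) := by
    rw [← map_pow, hγ]; push_cast; simp
  set β := algebraMap K E γ / α with hβ
  refine ⟨β, ?_, ?_⟩
  · rw [hβ]
    field_simp [hα]
    linear_combination hc - (q : E) * hα
  · have hqK : (q : K) ≠ 0 := Nat.cast_ne_zero.mpr hq.ne_zero
    have hmem : α ∈ Algebra.adjoin K {β} := by
      have key : α = algebraMap K E (γ / (q : K)) * β ^ 2 := by
        rw [hβ, map_div₀]
        have h2 : algebraMap K E (q : K) = (q : E) := by push_cast; simp
        rw [h2]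
        field_simp
        linear_combination (q : E) * hα - hc
      rw [key]
      exact Subalgebra.mul_mem _ (Subalgebra.algebraMap_mem _ _)
        (Subalgebra.pow_mem _ (Algebra.subset_adjoin (Set.mem_singleton _)) 2)
    refine le_antisymm le_top ?_
    rw [← hgen]
    exact Algebra.adjoin_le (Set.singleton_subset_iff.mpr hmem)

lemma aux_finrank_le (p : ℕ) (K E : Type*) [Field K] [NumberField K] [Field E] [NumberField E]
    [Algebra K E] (α : E) (hα : α ^ 3 = (p : E)) (hgen : Algebra.adjoin K {α} = ⊤) :
    Module.finrank K E ≤ 3 := by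
  have hint : IsIntegral K α := Algebra.IsIntegral.isIntegral α
  have htop : IntermediateField.adjoin K {α} = ⊤ := by
    have h1 : (⊤ : Subalgebra K E) ≤ (IntermediateField.adjoin K {α}).toSubalgebra := by
      rw [← hgen]
      exact Algebra.adjoin_le (IntermediateField.subset_adjoin K {α})
    exact IntermediateField.toSubalgebra_injective (le_antisymm le_top h1)
  have hfr : Module.finrank K (IntermediateField.adjoin K {α}) = (minpoly K α).natDegree :=
    IntermediateField.adjoin.finrank hint
  have hmd : minpoly K α ∣ X ^ 3 - C (p : K) := by
    apply minpoly.dvd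
    simp [hα]
  have hne : (X ^ 3 - C (p : K)) ≠ 0 := by
    intro h
    have := congrArg natDegree h
    rw [natDegree_X_pow_sub_C] at this
    simp at this
  have hdeg : (minpoly K α).natDegree ≤ 3 := by
    have := natDegree_le_of_dvd hmd hne
    rwa [natDegree_X_pow_sub_C] at this
  rw [htop, IntermediateField.finrank_top'] at hfr
  omega

/-- Let `K` be a number field containing a cube root of `pq` (for distinct primes
`p, q ≠ 3`) and let `E = K(∛p)` be defined by `x³ - p`. Then the relative discriminant
ideal of `E/K` (the norm of the different ideal) divides `(27)` in `𝓞 K`; in particular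
only primes of `K` above `3` can ramify in `E`. -/
theorem stmt_18 (p q : ℕ) (hp : p.Prime) (hq : q.Prime) (hpq : p ≠ q)
    (hp3 : p ≠ 3) (hq3 : q ≠ 3)
    (K E : Type*) [Field K] [NumberField K] [Field E] [NumberField E] [Algebra K E]
    (γ : K) (hγ : γ ^ 3 = ((p * q : ℕ) : K))
    (α : E) (hα : α ^ 3 = (p : E)) (hgen : Algebra.adjoin K {α} = ⊤) :
    Ideal.spanNorm (𝓞 K) (differentIdeal (𝓞 K) (𝓞 E)) ∣ Ideal.span {(27 : 𝓞 K)} ∧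
      ∀ P : Ideal (𝓞 E), P.IsPrime → P ≠ ⊥ →
        1 < Ideal.ramificationIdx'
            (P.comap (algebraMap (𝓞 K) (𝓞 E))) P →
          (3 : 𝓞 K) ∈ P.comap (algebraMap (𝓞 K) (𝓞 E)) := by
  obtain ⟨β, hβ3, hβgen⟩ := aux_beta p q hp hq K E γ hγ α hα hgen
  -- integral elements
  have hαint : IsIntegral ℤ α :=
    ⟨X ^ 3 - C (p : ℤ), monic_X_pow_sub_C _ (by norm_num), by simp [hα]⟩
  have hβint : IsIntegral ℤ β :=
    ⟨X ^ 3 - C (q : ℤ), monic_X_pow_sub_C _ (by norm_num), by simp [hβ3]⟩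
  set α' : 𝓞 E := ⟨α, hαint⟩ with hα'
  set β' : 𝓞 E := ⟨β, hβint⟩ with hβ'
  have hinj : Function.Injective (algebraMap (𝓞 E) E) := IsFractionRing.injective _ _
  have hα'3 : α' ^ 3 = ((p : ℕ) : 𝓞 E) := by
    apply hinj; rw [map_pow]; rw [map_natCast]; exact hα
  have hβ'3 : β' ^ 3 = ((q : ℕ) : 𝓞 E) := by
    apply hinj; rw [map_pow]; rw [map_natCast]; exact hβ3
  set d := differentIdeal (𝓞 K) (𝓞 E) with hd
  -- membership of 3x² in the different ideal
  have key : ∀ x : 𝓞 E, (r : ℕ) → x ^ 3 = ((r : ℕ) : 𝓞 E) →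
      Algebra.adjoin K {algebraMap (𝓞 E) E x} = ⊤ → 3 * x ^ 2 ∈ d := by
    intro x r hx3 hxgen
    have hf : aeval x (X ^ 3 - C ((r : ℕ) : 𝓞 K)) = 0 := by
      simp [hx3]
    have := aux_mem_diff K E x hxgen _ hf
    have hder : aeval x (derivative (X ^ 3 - C ((r : ℕ) : 𝓞 K))) = 3 * x ^ 2 := by
      simp
      exact Or.inl (by rw [map_ofNat]; norm_num)
    rwa [hder] at this
  have hmemα : 3 * α' ^ 2 ∈ d := key α' p hα'3 (by exact hgen)
  have hmemβ : 3 * β' ^ 2 ∈ d := key β' q hβ'3 (by exact hβgen)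
  -- d³ divides (27)
  have hcubeα : (3 * α' ^ 2) ^ 3 = 27 * ((p : ℕ) : 𝓞 E) ^ 2 := by
    have : (3 * α' ^ 2) ^ 3 = 27 * (α' ^ 3) ^ 2 := by ring
    rw [this, hα'3]
  have hcubeβ : (3 * β' ^ 2) ^ 3 = 27 * ((q : ℕ) : 𝓞 E) ^ 2 := by
    have : (3 * β' ^ 2) ^ 3 = 27 * (β' ^ 3) ^ 2 := by ring
    rw [this, hβ'3]
  have hmem1 : 27 * ((p : ℕ) : 𝓞 E) ^ 2 ∈ d ^ 3 := hcubeα ▸ Ideal.pow_mem_pow hmemα 3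
  have hmem2 : 27 * ((q : ℕ) : 𝓞 E) ^ 2 ∈ d ^ 3 := hcubeβ ▸ Ideal.pow_mem_pow hmemβ 3
  have hco : IsCoprime ((p : ℤ) ^ 2) ((q : ℤ) ^ 2) :=
    (Nat.isCoprime_iff_coprime.mpr ((Nat.coprime_primes hp hq).mpr hpq)).pow
  have hcoE : IsCoprime (((p : ℕ) : 𝓞 E) ^ 2) (((q : ℕ) : 𝓞 E) ^ 2) := by
    have := hco.map (algebraMap ℤ (𝓞 E))
    simpa [map_pow] using this
  obtain ⟨u, v, huv⟩ := hcoE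
  have h27 : (27 : 𝓞 E) ∈ d ^ 3 := by
    have heq : (27 : 𝓞 E) = u * (27 * ((p : ℕ) : 𝓞 E) ^ 2) + v * (27 * ((q : ℕ) : 𝓞 E) ^ 2) := by
      linear_combination (-27 : 𝓞 E) * huv
    rw [heq]
    exact Ideal.add_mem _ (Ideal.mul_mem_left _ u hmem1) (Ideal.mul_mem_left _ v hmem2)
  have hd3 : d ^ 3 ∣ Ideal.span {(27 : 𝓞 E)} :=
    Ideal.dvd_iff_le.mpr ((Ideal.span_singleton_le_iff_mem _).mpr h27)
  constructor
  · -- the norm of the different divides (27)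
    by_cases H : ∃ s : Finset (𝓞 E), Nonempty (Module.Basis s (𝓞 K) (𝓞 E))
    · obtain ⟨s, ⟨b⟩⟩ := H
      haveI : Module.Free (𝓞 K) (𝓞 E) := Module.Free.of_basis b
      have hnorm27 : Algebra.norm (𝓞 K) (27 : 𝓞 E) = (27 : 𝓞 K) ^ Module.finrank K E := by
        haveI : IsLocalization (Algebra.algebraMapSubmonoid (𝓞 E) (𝓞 K)⁰) E :=
          IsIntegralClosure.isLocalization (𝓞 K) K E (𝓞 E)
        have h := Algebra.norm_localization (𝓞 K) (𝓞 K)⁰ (Rₘ := K) (Sₘ := E) (27 : 𝓞 E)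
        apply IsFractionRing.injective (𝓞 K) K
        rw [← h]
        have h27' : algebraMap (𝓞 E) E (27 : 𝓞 E) = algebraMap K E (27 : K) := by
          simp [map_ofNat]
        rw [h27', Algebra.norm_algebraMap]
        simp [map_ofNat]
      have hn3 : Module.finrank K E ≤ 3 := aux_finrank_le p K E α hα hgen
      have h1 : Ideal.spanNorm (𝓞 K) (d ^ 3) ∣ Ideal.spanNorm (𝓞 K) (Ideal.span {(27 : 𝓞 E)}) :=
        Ideal.dvd_iff_le.mpr (Ideal.spanNorm_mono (𝓞 K) (Ideal.dvd_iff_le.mp hd3))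
      have hpow : Ideal.spanNorm (𝓞 K) (d ^ 3) = Ideal.spanNorm (𝓞 K) d ^ 3 := by
        rw [pow_succ, pow_succ, pow_one, Ideal.spanNorm_mul, Ideal.spanNorm_mul]
        ring
      rw [hpow, Ideal.spanNorm_singleton, Algebra.intNorm_eq_norm, hnorm27, ← Ideal.span_singleton_pow] at h1
      have h2 : Ideal.spanNorm (𝓞 K) d ^ 3 ∣ Ideal.span {(27 : 𝓞 K)} ^ 3 :=
        h1.trans (pow_dvd_pow _ hn3)
      refine aux_cube_dvd_cube ?_ h2
      rw [Ne, Ideal.span_singleton_eq_bot]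
      norm_num
    · have hnorm27 : Algebra.intNorm (𝓞 K) (𝓞 E) (27 : 𝓞 E) = (27 : 𝓞 K) ^ Module.finrank K E := by
        apply IsFractionRing.injective (𝓞 K) K
        rw [Algebra.algebraMap_intNorm (K := K) (L := E)]
        have h27' : algebraMap (𝓞 E) E (27 : 𝓞 E) = algebraMap K E (27 : K) := by
          simp [map_ofNat]
        rw [h27', Algebra.norm_algebraMap]
        simp [map_ofNat]
      have hn3 : Module.finrank K E ≤ 3 := aux_finrank_le p K E α hα hgen
      have h1 : Ideal.spanNorm (𝓞 K) (d ^ 3) ∣ Ideal.spanNorm (𝓞 K) (Ideal.span {(27 : 𝓞 E)}) :=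
        Ideal.dvd_iff_le.mpr (Ideal.spanNorm_mono (𝓞 K) (Ideal.dvd_iff_le.mp hd3))
      have hpow : Ideal.spanNorm (𝓞 K) (d ^ 3) = Ideal.spanNorm (𝓞 K) d ^ 3 := by
        rw [pow_succ, pow_succ, pow_one, Ideal.spanNorm_mul, Ideal.spanNorm_mul]
        ring
      rw [hpow, Ideal.spanNorm_singleton, hnorm27, ← Ideal.span_singleton_pow] at h1
      have h2 : Ideal.spanNorm (𝓞 K) d ^ 3 ∣ Ideal.span {(27 : 𝓞 K)} ^ 3 :=
        h1.trans (pow_dvd_pow _ hn3)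
      refine aux_cube_dvd_cube ?_ h2
      rw [Ne, Ideal.span_singleton_eq_bot]
      norm_num
  · -- ramified primes lie above 3
    intro P hP hPbot hram
    have hPd : P ∣ d := by
      set p0 := P.comap (algebraMap (𝓞 K) (𝓞 E)) with hp0
      have hp0ne : p0 ≠ ⊥ := fun h => hPbot (Ideal.eq_bot_of_comap_eq_bot h)
      haveI : p0.IsPrime := Ideal.IsPrime.comap _
      haveI : p0.IsMaximal := Ideal.IsPrime.isMaximal ‹_› hp0ne
      have hP2 : P ^ 2 ∣ p0.map (algebraMap (𝓞 K) (𝓞 E)) := by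
        rw [Ideal.dvd_iff_le]
        exact Ideal.le_pow_of_le_ramificationIdx hram
      have := pow_sub_one_dvd_differentIdeal (𝓞 K) P 2 hp0ne hP2
      simpa using this
    have h27P : (27 : 𝓞 E) ∈ P := by
      have hle : Ideal.span {(27 : 𝓞 E)} ≤ P :=
        le_trans (Ideal.dvd_iff_le.mp hd3)
          (le_trans (Ideal.pow_le_self (by norm_num)) (Ideal.dvd_iff_le.mp hPd))
      exact hle (Ideal.mem_span_singleton_self _)
    have h3P : (3 : 𝓞 E) ∈ P := by
      refine hP.mem_of_pow_mem 3 ?_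
      have : (3 : 𝓞 E) ^ 3 = 27 := by norm_num
      rwa [this]
    rw [Ideal.mem_comap]
    have : algebraMap (𝓞 K) (𝓞 E) (3 : 𝓞 K) = (3 : 𝓞 E) := map_ofNat _ 3
    rwa [this]
end
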